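/- Let b, c, ν, ρ, s ∈ ℂ with Re(ρ) > 0, Re(c) > 0, Re(ν) > -1, Re(s) > 0 and Re(s) > √|b|. Then the Laplace transform of t ↦ G_ν^{(b,c)}(t;ρ) satisfies ∫_0^∞ e^{-st} G_ν^{(b,c)}(t;ρ) dt = (1/s) · Σ_{k=0}^∞ (-b)^k (c;ρ)_{2k+ν} · (1/(2s))^{2k+ν} / (k! · Γ(ν+k+1)), where (1/(2s))^{2k+ν} is the principal complex power. -/

import Mathlib

open Complex MeasureTheory Real Set

/-- Extended Gamma function `Γ_ρ(x) = ∫_0^∞ t^(x-1) e^(-t-ρ/t) dt`. -/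
noncomputable def extGamma (ρ x : ℂ) : ℂ :=
  ∫ t in Ioi (0:ℝ), (t:ℂ) ^ (x - 1) * Complex.exp (-(t:ℂ) - ρ / (t:ℂ))

/-- Generalized Pochhammer symbol `(c;ρ)_μ = Γ_ρ(c+μ)/Γ(c)`. -/
noncomputable def genPoch (c ρ μ : ℂ) : ℂ := extGamma ρ (c + μ) / Complex.Gamma c

/-- Unified four parameter Bessel function `G_ν^{(b,c)}(z;ρ)` with complex order,
powers being principal complex powers. -/
noncomputable def unifiedG (b c ν ρ z : ℂ) : ℂ :=
  ∑' k : ℕ, (-b) ^ k * genPoch c ρ (2 * (k:ℂ) + ν) * (z / 2) ^ (2 * (k:ℂ) + ν) /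
    ((k.factorial : ℂ) * Complex.Gamma (ν + (k:ℂ) + 1) * Complex.Gamma (ν + 2 * (k:ℂ) + 1))

/-- Unified four parameter Bessel function with integer order, powers being integer powers. -/
noncomputable def unifiedGInt (b c ρ : ℂ) (ν : ℤ) (z : ℂ) : ℂ :=
  ∑' k : ℕ, (-b) ^ k * genPoch c ρ (2 * (k:ℂ) + (ν:ℂ)) * (z / 2) ^ (2 * (k:ℤ) + ν) /
    ((k.factorial : ℂ) * Complex.Gamma ((ν:ℂ) + (k:ℂ) + 1) * Complex.Gamma ((ν:ℂ) + 2 * (k:ℂ) + 1))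

/-- Pochhammer symbol `(a)_k = Γ(a+k)/Γ(a)`. -/
noncomputable def poch (a : ℂ) (k : ℕ) : ℂ := Complex.Gamma (a + (k:ℂ)) / Complex.Gamma a

/-- Generalized hypergeometric function `₀F₃`. -/
noncomputable def hyp0F3 (a₁ a₂ a₃ w : ℂ) : ℂ :=
  ∑' k : ℕ, w ^ k / (poch a₁ k * poch a₂ k * poch a₃ k * (k.factorial : ℂ))

/-- Generalized hypergeometric function `₂F₃`. -/
noncomputable def hyp2F3 (a₁ a₂ b₁ b₂ b₃ w : ℂ) : ℂ :=
  ∑' k : ℕ, poch a₁ k * poch a₂ k * w ^ k /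
    (poch b₁ k * poch b₂ k * poch b₃ k * (k.factorial : ℂ))

/-- Bessel function of the first kind `J_μ(z)` for real `z > 0`. -/
noncomputable def besselJ (μ : ℂ) (z : ℝ) : ℂ :=
  ∑' k : ℕ, (-1) ^ k * ((z:ℂ) / 2) ^ (2 * (k:ℂ) + μ) /
    ((k.factorial : ℂ) * Complex.Gamma (μ + (k:ℂ) + 1))

/-- Generalized four parameter spherical Bessel function
`g_ν^{(b,c)}(z;ρ) = √(π/(2z)) · G_{ν+1/2}^{(b,c-1/2)}(z;ρ)`. -/
noncomputable def sphG (b c ν ρ : ℂ) (z : ℝ) : ℂ :=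
  (Real.sqrt (π / (2 * z)) : ℂ) * unifiedG b (c - 1/2) (ν + 1/2) ρ (z:ℂ)

/-- Generalized four parameter Bessel-Clifford function
`C_ν^{(b,λ)}(z;ρ) = z^{-ν/2} · G_ν^{(b,λ)}(2√z;ρ)` for real `z > 0`. -/
noncomputable def cliffC (b lam ν ρ : ℂ) (z : ℝ) : ℂ :=
  (z:ℂ) ^ (-ν / 2) * unifiedG b lam ν ρ ((2 * Real.sqrt z : ℝ) : ℂ)


open Filter


lemma auxA_int_rpow_exp {c σ : ℝ} (hc : -1 < c) (hσ : 0 < σ) :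
    IntegrableOn (fun t : ℝ => t ^ c * Real.exp (-(σ * t))) (Ioi 0) := by
  have hg := Real.GammaIntegral_convergent (by linarith : (0:ℝ) < c + 1)
  have h0 : IntegrableOn (fun x : ℝ => Real.exp (-(σ * x)) * (σ * x) ^ (c + 1 - 1)) (Ioi 0) := by
    have := (MeasureTheory.integrableOn_Ioi_comp_mul_left_iff
      (fun x : ℝ => Real.exp (-x) * x ^ (c + 1 - 1)) 0 hσ).mpr (by simpa using hg)
    simpa using this
  have h1 : IntegrableOn (fun x : ℝ => σ ^ (-c) * (Real.exp (-(σ * x)) * (σ * x) ^ (c + 1 - 1))) (Ioi 0) := h0.const_mul _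
  refine h1.congr_fun (fun t ht => ?_) measurableSet_Ioi
  rw [mem_Ioi] at ht
  have h2 : σ ^ (-c) * σ ^ c = 1 := by rw [← Real.rpow_add hσ]; simp
  simp only [add_sub_cancel_right, Real.mul_rpow hσ.le ht.le]
  calc σ ^ (-c) * (Real.exp (-(σ * t)) * (σ ^ c * t ^ c))
      = (σ ^ (-c) * σ ^ c) * (t ^ c * Real.exp (-(σ * t))) := by ring
    _ = t ^ c * Real.exp (-(σ * t)) := by rw [h2, one_mul]

lemma auxA_norm_cpow_exp {w s : ℂ} {t : ℝ} (ht : 0 < t) :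
    ‖(t:ℂ) ^ w * Complex.exp (-(s * t))‖ = t ^ w.re * Real.exp (-(s.re * t)) := by
  rw [norm_mul, Complex.norm_exp,
    Complex.norm_cpow_eq_rpow_re_of_pos ht]
  congr 2
  simp [Complex.mul_re]

lemma auxA_cont_cpow_exp (w s : ℂ) :
    ContinuousOn (fun t : ℝ => (t:ℂ) ^ w * Complex.exp (-(s * t))) (Ioi 0) := by
  refine ContinuousOn.mul (fun t ht => ?_) (Continuous.continuousOn ?_)
  · exact ((continuousAt_cpow_const
      (Complex.ofReal_mem_slitPlane.2 ht)).comp Complex.continuous_ofReal.continuousAt).continuousWithinAt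
  · exact Complex.continuous_exp.comp (continuous_const.mul Complex.continuous_ofReal).neg

lemma auxA_int_cpow_exp {w s : ℂ} (hw : -1 < w.re) (hs : 0 < s.re) :
    IntegrableOn (fun t : ℝ => (t:ℂ) ^ w * Complex.exp (-(s * t))) (Ioi 0) := by
  refine Integrable.mono' (auxA_int_rpow_exp hw hs)
    ((auxA_cont_cpow_exp w s).aestronglyMeasurable measurableSet_Ioi) ?_
  rw [ae_restrict_iff' measurableSet_Ioi]
  filter_upwards with t ht
  rw [auxA_norm_cpow_exp ht]
lemma auxA_diffF {a : ℂ} (ha : 0 < a.re) :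
    DifferentiableOn ℂ
      (fun z : ℂ => ∫ t in Ioi (0:ℝ), (t:ℂ) ^ (a - 1) * Complex.exp (-(z * t))) {z | 0 < z.re} := by
  intro z₀ hz₀
  simp only [mem_setOf_eq] at hz₀
  set ε : ℝ := z₀.re / 2 with hε
  have hε0 : 0 < ε := by positivity
  set F' : ℂ → ℝ → ℂ := fun z t => (t:ℂ) ^ (a - 1) * (Complex.exp (-(z * t)) * -(t:ℂ)) with hF'
  have key := hasDerivAt_integral_of_dominated_loc_of_deriv_le (μ := volume.restrict (Ioi 0))
    (F := fun z t => (t:ℂ) ^ (a - 1) * Complex.exp (-(z * t))) (F' := F')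
    (x₀ := z₀) (bound := fun t : ℝ => t ^ a.re * Real.exp (-(ε * t))) (Metric.ball_mem_nhds z₀ hε0)
    ?_ ?_ ?_ ?_ ?_ ?_
  · exact (key.2.differentiableAt).differentiableWithinAt
  · filter_upwards with z
    exact ((auxA_cont_cpow_exp (a-1) z).aestronglyMeasurable measurableSet_Ioi)
  · exact auxA_int_cpow_exp (by simpa using ha) hz₀
  · refine ContinuousOn.aestronglyMeasurable ?_ measurableSet_Ioi
    exact (auxA_cont_cpow_exp (a-1) z₀).mul
      (Complex.continuous_ofReal.neg.continuousOn)
      |>.congr (fun t ht => by simp [F']; ring)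
  · rw [ae_restrict_iff' measurableSet_Ioi]
    filter_upwards with t ht z hz
    rw [mem_Ioi] at ht
    have hzre : ε ≤ z.re := by
      have h1 : |(z - z₀).re| ≤ ‖z - z₀‖ := Complex.abs_re_le_norm _
      have h2 : ‖z - z₀‖ < ε := by
        rw [Metric.mem_ball, Complex.dist_eq] at hz; exact hz
      have h3 : |z.re - z₀.re| < ε := by
        simpa using lt_of_le_of_lt h1 h2
      have := abs_lt.mp h3
      simp only [hε] at *
      linarith [this.1]
    have hnorm : ‖F' z t‖ = t ^ (a.re - 1) * (Real.exp (-(z.re * t)) * t) := by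
      simp only [F', norm_mul, norm_neg,
        Complex.norm_cpow_eq_rpow_re_of_pos ht, Complex.norm_exp, Complex.norm_real, Real.norm_eq_abs,
        abs_of_pos ht, Complex.sub_re, Complex.one_re]
      congr 2
      simp [Complex.mul_re]
    rw [hnorm]
    have hcol : t ^ (a.re - 1) * (Real.exp (-(z.re * t)) * t) = t ^ a.re * Real.exp (-(z.re * t)) := by
      rw [show a.re = (a.re - 1) + 1 by ring, Real.rpow_add ht, Real.rpow_one]
      ring_nf
    rw [hcol]
    have : Real.exp (-(z.re * t)) ≤ Real.exp (-(ε * t)) := by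
      apply Real.exp_le_exp.mpr
      nlinarith
    exact mul_le_mul_of_nonneg_left this (Real.rpow_nonneg ht.le _)
  · exact auxA_int_rpow_exp (by linarith) hε0
  · rw [ae_restrict_iff' measurableSet_Ioi]
    filter_upwards with t ht z hz
    have h := (((hasDerivAt_id z).mul_const (t:ℂ)).neg.cexp).const_mul ((t:ℂ) ^ (a - 1))
    simp only [id_eq, one_mul] at h
    exact h
lemma auxA_laplace {a s : ℂ} (ha : 0 < a.re) (hs : 0 < s.re) :
    ∫ t in Ioi (0:ℝ), (t:ℂ) ^ (a - 1) * Complex.exp (-(s * t)) =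
      (1 / s) ^ a * Complex.Gamma a := by
  set U : Set ℂ := {z | 0 < z.re} with hU
  have hU_open : IsOpen U := isOpen_lt continuous_const Complex.continuous_re
  have hG : DifferentiableOn ℂ (fun z : ℂ => (1 / z) ^ a * Complex.Gamma a) U := by
    intro z hz
    have hzre : 0 < z.re := hz
    have hz0 : z ≠ 0 := fun h => by simp [h] at hzre
    refine DifferentiableAt.differentiableWithinAt (DifferentiableAt.mul_const ?_ _)
    refine DifferentiableAt.cpow ?_ (differentiableAt_const a) ?_
    · exact (differentiableAt_const (1:ℂ)).div differentiableAt_id hz0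
    · refine Or.inl ?_
      simp only [one_div, Complex.inv_re]
      exact div_pos hzre (Complex.normSq_pos.2 hz0)
  have hfreq : ∃ᶠ z in nhdsWithin (1:ℂ) {(1:ℂ)}ᶜ,
      (∫ t in Ioi (0:ℝ), (t:ℂ) ^ (a - 1) * Complex.exp (-(z * t))) =
        (1 / z) ^ a * Complex.Gamma a := by
    have htend : Tendsto (fun n : ℕ => ((1 + 1/(n+1) : ℝ) : ℂ)) atTop
        (nhdsWithin (1:ℂ) {(1:ℂ)}ᶜ) := by
      rw [tendsto_nhdsWithin_iff]
      constructor
      · have h1 : Tendsto (fun n : ℕ => (1 + 1/(n+1) : ℝ)) atTop (nhds 1) := by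
          have := tendsto_one_div_add_atTop_nhds_zero_nat (𝕜 := ℝ)
          have h2 := tendsto_const_nhds (x := (1:ℝ)) (f := atTop (α := ℕ)) |>.add this
          simpa using h2
        have := (Complex.continuous_ofReal.tendsto 1).comp h1
        simpa [Function.comp_def] using this
      · filter_upwards with n
        simp only [mem_compl_iff, mem_singleton_iff]
        intro h
        have h' : (1 + 1/(n+1) : ℝ) = 1 := by exact_mod_cast h
        have hp : 0 < (1:ℝ)/(n+1) := by positivity
        linarith
    refine htend.frequently (Frequently.of_forall fun n => ?_)
    have hr : 0 < (1 + 1/(n+1) : ℝ) := by positivity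
    exact Complex.integral_cpow_mul_exp_neg_mul_Ioi ha hr
  have heq := ((auxA_diffF ha).analyticOnNhd hU_open).eqOn_of_preconnected_of_frequently_eq
    (hG.analyticOnNhd hU_open) ((convex_halfSpace_re_gt 0).isPreconnected)
    (show (1:ℂ) ∈ U by simp [hU]) hfreq
  exact heq hs

lemma auxA_ofReal_mul_cpow {r : ℝ} (hr : 0 < r) {z : ℂ} (hz : z ≠ 0) (w : ℂ) :
    ((r:ℂ) * z) ^ w = (r:ℂ) ^ w * z ^ w := by
  have hr' : (r:ℂ) ≠ 0 := Complex.ofReal_ne_zero.mpr hr.ne'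
  rw [Complex.cpow_def_of_ne_zero (mul_ne_zero hr' hz), Complex.log_ofReal_mul hr hz,
    add_mul, Complex.exp_add, ← Complex.cpow_def_of_ne_zero hz]
  congr 1
  rw [Complex.cpow_def_of_ne_zero hr', Complex.ofReal_log hr.le]

lemma auxC_exp_neg_le {v : ℝ} (hv : 0 < v) : Real.exp (-v) ≤ 4 / v ^ 2 := by
  have h1 : Real.exp (v/2) * Real.exp (v/2) = Real.exp v := by
    rw [← Real.exp_add]; ring_nf
  have h2 := Real.add_one_le_exp (v/2)
  rw [le_div_iff₀ (by positivity : (0:ℝ) < v ^ 2), Real.exp_neg,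
    inv_mul_le_iff₀ (Real.exp_pos v)]
  nlinarith [Real.exp_pos (v/2)]

lemma auxC_extGamma_bound {ρ x : ℂ} (hρ : 0 < ρ.re) (hx : -2 < x.re) :
    ‖extGamma ρ x‖ ≤ 4 / ρ.re ^ 2 * Real.Gamma (x.re + 2) := by
  have hint : IntegrableOn
      (fun t : ℝ => 4 / ρ.re ^ 2 * (t ^ (x.re + 2 - 1) * Real.exp (-(1 * t)))) (Ioi 0) :=
    (auxA_int_rpow_exp (by linarith) one_pos).const_mul _
  have hb : ∀ᵐ (t : ℝ) ∂(volume.restrict (Ioi (0:ℝ))),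
      ‖(t:ℂ) ^ (x - 1) * Complex.exp (-(t:ℂ) - ρ / t)‖ ≤
        4 / ρ.re ^ 2 * (t ^ (x.re + 2 - 1) * Real.exp (-(1 * t))) := by
    rw [ae_restrict_iff' measurableSet_Ioi]
    filter_upwards with t ht
    rw [mem_Ioi] at ht
    have h1 : ‖(t:ℂ) ^ (x - 1)‖ = t ^ (x.re - 1) := by
      rw [Complex.norm_cpow_eq_rpow_re_of_pos ht, Complex.sub_re,
        Complex.one_re]
    have hre : (ρ / (t:ℂ)).re = ρ.re / t := by
      rw [div_eq_mul_inv, ← Complex.ofReal_inv, mul_comm, Complex.re_ofReal_mul]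
      rw [div_eq_mul_inv, mul_comm]
    have h2 : ‖Complex.exp (-(t:ℂ) - ρ / t)‖ = Real.exp (-t) * Real.exp (-(ρ.re / t)) := by
      rw [Complex.norm_exp, ← Real.exp_add]
      congr 1
      simp only [Complex.sub_re, Complex.neg_re, Complex.ofReal_re, hre]
      ring
    rw [norm_mul, h1, h2]
    have h3 : Real.exp (-(ρ.re / t)) ≤ 4 / (ρ.re / t) ^ 2 := auxC_exp_neg_le (by positivity)
    have h4 : 4 / (ρ.re / t) ^ 2 = 4 / ρ.re ^ 2 * t ^ 2 := by
      field_simp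
    have h5 : t ^ (x.re - 1) * t ^ (2:ℝ) = t ^ (x.re + 2 - 1) := by
      rw [← Real.rpow_add ht]; ring_nf
    have h6 : (t:ℝ) ^ (2:ℝ) = t ^ 2 := by
      rw [show ((2:ℝ)) = ((2:ℕ):ℝ) by norm_num, Real.rpow_natCast]
    calc t ^ (x.re - 1) * (Real.exp (-t) * Real.exp (-(ρ.re / t)))
        ≤ t ^ (x.re - 1) * (Real.exp (-t) * (4 / ρ.re ^ 2 * t ^ 2)) := by
          have := h3.trans_eq h4
          have h7 : (0:ℝ) ≤ t ^ (x.re - 1) := Real.rpow_nonneg ht.le _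
          have h8 : (0:ℝ) ≤ Real.exp (-t) := (Real.exp_pos _).le
          nlinarith [mul_le_mul_of_nonneg_left this h8]
      _ = 4 / ρ.re ^ 2 * (t ^ (x.re + 2 - 1) * Real.exp (-(1 * t))) := by
          rw [← h5, h6, one_mul]; ring
  calc ‖extGamma ρ x‖ ≤ ∫ t in Ioi (0:ℝ), 4 / ρ.re ^ 2 * (t ^ (x.re + 2 - 1) * Real.exp (-(1 * t))) :=
        norm_integral_le_of_norm_le hint hb
    _ = 4 / ρ.re ^ 2 * Real.Gamma (x.re + 2) := by
        rw [MeasureTheory.integral_const_mul,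
          integral_rpow_mul_exp_neg_mul_Ioi (by linarith : (0:ℝ) < x.re + 2) one_pos]
        norm_num

lemma auxC_gamma_lower {z : ℂ} (hz : 0 < z.re) (n : ℕ) :
    Real.Gamma (z.re + n) * ‖Complex.Gamma z‖ ≤
      ‖Complex.Gamma (z + n)‖ * Real.Gamma z.re := by
  induction n with
  | zero => simp [mul_comm]
  | succ n ih =>
    have hzn : (z + (n:ℂ)) ≠ 0 := by
      intro h
      have := congrArg Complex.re h
      simp only [Complex.add_re, Complex.natCast_re, Complex.zero_re] at this
      have hn : (0:ℝ) ≤ (n:ℝ) := Nat.cast_nonneg n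
      linarith
    have h1 : Complex.Gamma (z + ((n:ℕ)+1:ℂ)) = (z + n) * Complex.Gamma (z + n) := by
      rw [show (z + ((n:ℕ)+1:ℂ)) = (z + (n:ℂ)) + 1 by push_cast; ring,
        Complex.Gamma_add_one _ hzn]
    have h2 : Real.Gamma (z.re + ((n:ℕ)+1:ℝ)) = (z.re + n) * Real.Gamma (z.re + n) := by
      rw [show (z.re + ((n:ℕ)+1:ℝ)) = (z.re + (n:ℝ)) + 1 by push_cast; ring,
        Real.Gamma_add_one (by positivity)]
    have h3 : (z.re + (n:ℝ)) ≤ ‖z + n‖ := by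
      have := Complex.re_le_norm (z + n)
      simpa using this
    have hpos : (0:ℝ) < z.re + n := by positivity
    have hGz : (0:ℝ) ≤ ‖Complex.Gamma z‖ := norm_nonneg _
    have hGzn : (0:ℝ) ≤ ‖Complex.Gamma (z + n)‖ := norm_nonneg _
    have hGr : (0:ℝ) < Real.Gamma z.re := Real.Gamma_pos_of_pos hz
    have hGrn : (0:ℝ) < Real.Gamma (z.re + n) := Real.Gamma_pos_of_pos (by positivity)
    push_cast
    rw [h1, h2, norm_mul]
    calc (z.re + n) * Real.Gamma (z.re + n) * ‖Complex.Gamma z‖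
        ≤ (z.re + n) * (‖Complex.Gamma (z + n)‖ * Real.Gamma z.re) := by
          rw [mul_assoc]
          exact mul_le_mul_of_nonneg_left ih hpos.le
      _ ≤ ‖z + n‖ * ‖Complex.Gamma (z + n)‖ * Real.Gamma z.re := by
          rw [← mul_assoc]
          exact mul_le_mul_of_nonneg_right
            (mul_le_mul_of_nonneg_right h3 hGzn) hGr.le

lemma auxD_summable {Q A g : ℝ} (hQ : 0 ≤ Q) (hQ4 : 4 * Q < 1) (hA : 0 < A) (hg : 0 < g) :
    Summable (fun k : ℕ => Q ^ k * Real.Gamma (A + 2 * k) / (k.factorial * Real.Gamma (g + k))) := by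
  set f : ℕ → ℝ := fun k => Q ^ k * Real.Gamma (A + 2 * k) / (k.factorial * Real.Gamma (g + k))
    with hf
  have hfnn : ∀ k, 0 ≤ f k := by
    intro k
    have h1 := Real.Gamma_pos_of_pos (show (0:ℝ) < A + 2*(k:ℝ) by positivity)
    have h2 := Real.Gamma_pos_of_pos (show (0:ℝ) < g + (k:ℝ) by positivity)
    have h3 : (0:ℝ) < (k.factorial : ℝ) := by exact_mod_cast k.factorial_pos
    rw [hf]
    positivity
  set r : ℝ := (4 * Q + 1) / 2 with hr
  refine summable_of_ratio_norm_eventually_le (show r < 1 by rw [hr]; linarith) ?_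
  have t0 : Tendsto (fun k : ℕ => (1:ℝ)/(k+1)) atTop (nhds 0) :=
    tendsto_one_div_add_atTop_nhds_zero_nat
  have t1 : Tendsto (fun k : ℕ => (A + (2*(k:ℝ)+1))/((k:ℝ)+1)) atTop (nhds 2) := by
    have e : ∀ k : ℕ, (A + (2*(k:ℝ)+1))/((k:ℝ)+1) = 2 + (A - 1) * (1/((k:ℝ)+1)) := by
      intro k
      have hk : ((k:ℝ)+1) ≠ 0 := by positivity
      field_simp
      ring
    have h2 := Tendsto.congr (fun k => (e k).symm)
      (tendsto_const_nhds.add (t0.const_mul (A-1)))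
    simpa using h2
  have tg : Tendsto (fun k : ℕ => 1/(g+(k:ℝ))) atTop (nhds 0) := by
    have h := tendsto_atTop_add_const_left atTop g (tendsto_natCast_atTop_atTop (R := ℝ))
    simpa only [one_div, Pi.inv_def] using h.inv_tendsto_atTop
  have t2 : Tendsto (fun k : ℕ => (A + 2*(k:ℝ))/(g+(k:ℝ))) atTop (nhds 2) := by
    have e : ∀ k : ℕ, (A + 2*(k:ℝ))/(g+(k:ℝ)) = 2 + (A - 2*g) * (1/(g+(k:ℝ))) := by
      intro k
      have hk : (g+(k:ℝ)) ≠ 0 := by positivity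
      field_simp
      ring
    have h2 := Tendsto.congr (fun k => (e k).symm)
      (tendsto_const_nhds.add (tg.const_mul (A-2*g)))
    simpa using h2
  have ht : Tendsto (fun k : ℕ => Q * ((A + (2*(k:ℝ)+1))/((k:ℝ)+1)) * ((A + 2*(k:ℝ))/(g+(k:ℝ))))
      atTop (nhds (Q * 2 * 2)) := (t1.const_mul Q).mul t2
  have hev : ∀ᶠ k : ℕ in atTop,
      Q * ((A + (2*(k:ℝ)+1))/((k:ℝ)+1)) * ((A + 2*(k:ℝ))/(g+(k:ℝ))) < r :=
    ht.eventually_lt_const (by rw [hr]; linarith)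
  filter_upwards [hev] with k hk
  have hG1 : (0:ℝ) < Real.Gamma (A + 2*(k:ℝ)) := Real.Gamma_pos_of_pos (by positivity)
  have hG2 : (0:ℝ) < Real.Gamma (g + (k:ℝ)) := Real.Gamma_pos_of_pos (by positivity)
  have hfac : (0:ℝ) < (k.factorial : ℝ) := by exact_mod_cast k.factorial_pos
  have key : f (k+1) = (Q * ((A + (2*(k:ℝ)+1))/((k:ℝ)+1)) * ((A + 2*(k:ℝ))/(g+(k:ℝ)))) * f k := by
    rw [hf]
    simp only
    push_cast [Nat.factorial_succ]
    rw [show A + 2*((k:ℝ)+1) = (A + (2*(k:ℝ)+1)) + 1 by ring,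
      Real.Gamma_add_one (by positivity),
      show A + (2*(k:ℝ)+1) = (A + 2*(k:ℝ)) + 1 by ring,
      Real.Gamma_add_one (by positivity),
      show g + ((k:ℝ)+1) = (g + (k:ℝ)) + 1 by ring,
      Real.Gamma_add_one (by positivity)]
    have hk1 : ((k:ℝ)+1) ≠ 0 := by positivity
    have hgk : (g+(k:ℝ)) ≠ 0 := by positivity
    field_simp
    ring
  rw [Real.norm_eq_abs, Real.norm_eq_abs, _root_.abs_of_nonneg (hfnn _), _root_.abs_of_nonneg (hfnn _), key]
  exact mul_le_mul_of_nonneg_right hk.le (hfnn k)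

lemma auxE_half_split {t : ℝ} (ht : t ≠ 0) (W : ℂ) :
    ((t:ℂ)/2) ^ W = ((2:ℂ)⁻¹) ^ W * (t:ℂ) ^ W := by
  have h := auxA_ofReal_mul_cpow (by norm_num : (0:ℝ) < 2⁻¹)
    (Complex.ofReal_ne_zero.mpr ht) W
  have e : ((2⁻¹:ℝ):ℂ) * (t:ℂ) = (t:ℂ)/2 := by push_cast; ring
  rw [e] at h
  rw [h]
  norm_num

set_option maxHeartbeats 1000000 in
theorem stmt4 (b c ν ρ s : ℂ) (hρ : 0 < ρ.re) (hc : 0 < c.re) (hν : -1 < ν.re)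
    (hs : 0 < s.re) (hsb : Real.sqrt (‖b‖) < s.re) :
    (∫ t in Ioi (0:ℝ), Complex.exp (-s * (t:ℂ)) * unifiedG b c ν ρ (t:ℂ)) =
      1 / s * ∑' k : ℕ, (-b) ^ k * genPoch c ρ (2 * (k:ℂ) + ν) *
        (1 / (2 * s)) ^ (2 * (k:ℂ) + ν) /
        ((k.factorial : ℂ) * Complex.Gamma (ν + (k:ℂ) + 1)) := by
  have hσ : 0 < s.re := hs
  have hs0 : s ≠ 0 := fun h => by simp [h] at hs
  have h1s : (1:ℂ)/s ≠ 0 := one_div_ne_zero hs0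
  set W : ℕ → ℂ := fun k => 2*(k:ℂ) + ν with hW
  have hWre : ∀ k : ℕ, (W k).re = 2*(k:ℝ) + ν.re := fun k => by simp [hW]
  have hWre1 : ∀ k : ℕ, -1 < (W k).re := fun k => by
    rw [hWre]; have : (0:ℝ) ≤ (k:ℝ) := Nat.cast_nonneg k; linarith
  set C : ℕ → ℂ := fun k => (-b)^k * genPoch c ρ (W k) /
      ((k.factorial : ℂ) * Complex.Gamma (ν + (k:ℂ) + 1) *
        Complex.Gamma (ν + 2*(k:ℂ) + 1)) with hC
  set T : ℕ → ℝ → ℂ := fun k t =>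
    Complex.exp (-s * (t:ℂ)) * (C k * (((t:ℝ):ℂ)/2) ^ (W k)) with hT
  have hint_eq : ∀ t : ℝ, Complex.exp (-s * (t:ℂ)) * unifiedG b c ν ρ (t:ℂ) = ∑' k, T k t := by
    intro t
    rw [unifiedG, ← tsum_mul_left]
    exact tsum_congr fun k => by rw [hT, hC]; simp only; ring
  have hTint : ∀ k, IntegrableOn (T k) (Ioi 0) := by
    intro k
    have hint : IntegrableOn (fun t : ℝ => C k * ((2:ℂ)⁻¹) ^ (W k) *
        ((t:ℂ) ^ (W k) * Complex.exp (-(s * t)))) (Ioi 0) :=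
      (auxA_int_cpow_exp (hWre1 k) hs).const_mul _
    refine hint.congr_fun (fun t ht => ?_) measurableSet_Ioi
    rw [mem_Ioi] at ht
    rw [hT]; simp only
    rw [auxE_half_split ht.ne' (W k), neg_mul]
    ring
  have hGW : ∀ k : ℕ, Complex.Gamma (W k + 1) = Complex.Gamma (ν + 2*(k:ℂ) + 1) := by
    intro k; congr 1; rw [hW]; ring
  have hΓ1ne : ∀ k : ℕ, Complex.Gamma (ν + (k:ℂ) + 1) ≠ 0 := by
    intro k
    refine Complex.Gamma_ne_zero_of_re_pos ?_
    simp only [Complex.add_re, Complex.one_re, Complex.natCast_re]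
    have : (0:ℝ) ≤ (k:ℝ) := Nat.cast_nonneg k; linarith
  have hΓ2ne : ∀ k : ℕ, Complex.Gamma (ν + 2*(k:ℂ) + 1) ≠ 0 := by
    intro k
    refine Complex.Gamma_ne_zero_of_re_pos ?_
    have h2 : (2*(k:ℂ)).re = 2*(k:ℝ) := by simp
    simp only [Complex.add_re, Complex.one_re, h2]
    have : (0:ℝ) ≤ (k:ℝ) := Nat.cast_nonneg k; linarith
  have hfacne : ∀ k : ℕ, ((k.factorial : ℂ)) ≠ 0 := fun k =>
    Nat.cast_ne_zero.mpr k.factorial_pos.ne'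
  have hTval : ∀ k : ℕ, (∫ t in Ioi (0:ℝ), T k t) =
      1/s * ((-b) ^ k * genPoch c ρ (2 * (k:ℂ) + ν) * (1 / (2 * s)) ^ (2 * (k:ℂ) + ν) /
        ((k.factorial : ℂ) * Complex.Gamma (ν + (k:ℂ) + 1))) := by
    intro k
    have e1 : EqOn (T k) (fun t : ℝ => (C k * ((2:ℂ)⁻¹) ^ (W k)) *
        ((t:ℂ) ^ ((W k + 1) - 1) * Complex.exp (-(s * t)))) (Ioi 0) := by
      intro t ht
      rw [mem_Ioi] at ht
      rw [hT]; simp only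
      rw [add_sub_cancel_right, auxE_half_split ht.ne' (W k), neg_mul]
      ring
    rw [setIntegral_congr_fun measurableSet_Ioi e1, MeasureTheory.integral_const_mul,
      auxA_laplace (show 0 < (W k + 1).re by
        rw [Complex.add_re, hWre, Complex.one_re]
        have : (0:ℝ) ≤ (k:ℝ) := Nat.cast_nonneg k; linarith) hs]
    have h2 : (1/(2*s)) ^ (W k) = ((2:ℂ)⁻¹) ^ (W k) * (1/s) ^ (W k) := by
      have h := auxA_ofReal_mul_cpow (show (0:ℝ) < 2⁻¹ by norm_num) h1s (W k)
      have e : ((2⁻¹:ℝ):ℂ) * (1/s) = 1/(2*s) := by push_cast; ring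
      rw [e] at h
      rw [h]
      norm_num
    have h3 : (1/s) ^ (W k + 1) = (1/s) ^ (W k) * (1/s) := by
      rw [Complex.cpow_add _ _ h1s, Complex.cpow_one]
    rw [h3, hC]
    simp only [hW] at h2 ⊢
    rw [h2, show Complex.Gamma (2*(k:ℂ)+ν+1) = Complex.Gamma (ν+2*(k:ℂ)+1) by congr 1; ring]
    field_simp
    rw [div_eq_div_iff
      (mul_ne_zero (mul_ne_zero (hfacne k) (hΓ1ne k)) (hΓ2ne k))
      (mul_ne_zero (hfacne k) (hΓ1ne k))]
    ring
  have hGc0 : 0 < ‖Complex.Gamma c‖ :=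
    norm_pos_iff.mpr (Complex.Gamma_ne_zero_of_re_pos hc)
  have hν1 : 0 < (ν + 1).re := by simp only [Complex.add_re, Complex.one_re]; linarith
  have hG00 : 0 < ‖Complex.Gamma (ν+1)‖ :=
    norm_pos_iff.mpr (Complex.Gamma_ne_zero_of_re_pos hν1)
  set g : ℝ := ν.re + 1 with hgdef
  have hg0 : 0 < g := by rw [hgdef]; linarith
  have hGr0 : 0 < Real.Gamma g := Real.Gamma_pos_of_pos hg0
  set A : ℝ := c.re + ν.re + 2 with hAdef
  have hA0 : 0 < A := by rw [hAdef]; linarith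
  set Q : ℝ := ‖b‖ / (4 * s.re^2) with hQdef
  have hQ0 : 0 ≤ Q := by rw [hQdef]; positivity
  have hb2 : ‖b‖ < s.re^2 := by
    have h1 : Real.sqrt (‖b‖) ^ 2 < s.re ^ 2 :=
      pow_lt_pow_left₀ hsb (Real.sqrt_nonneg _) (by norm_num)
    rwa [Real.sq_sqrt (norm_nonneg b)] at h1
  have hQ4 : 4 * Q < 1 := by
    have e : 4 * Q = ‖b‖ / s.re^2 := by rw [hQdef]; field_simp
    rw [e, div_lt_one (by positivity)]
    exact hb2
  set K : ℝ := (4/ρ.re^2 / ‖Complex.Gamma c‖) *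
      (Real.Gamma g / ‖Complex.Gamma (ν+1)‖)^2 *
      (2⁻¹:ℝ)^(ν.re) * (1/s.re)^(ν.re+1) with hKdef
  set M : ℕ → ℝ := fun k => K * (Q^k * Real.Gamma (A + 2*k) /
      (k.factorial * Real.Gamma (g + k))) with hMdef
  have hMsum : Summable M := (auxD_summable hQ0 hQ4 hA0 hg0).mul_left K
  have hnormval : ∀ k : ℕ, (∫ t in Ioi (0:ℝ), ‖T k t‖) =
      ‖C k‖ * ((2⁻¹:ℝ)^(2*(k:ℝ)+ν.re) *
        ((1/s.re)^(g+2*(k:ℝ)) * Real.Gamma (g+2*(k:ℝ)))) := by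
    intro k
    have e : EqOn (fun t : ℝ => ‖T k t‖) (fun t : ℝ =>
        (‖C k‖ * (2⁻¹:ℝ)^(2*(k:ℝ)+ν.re)) *
          (t ^ ((g+2*(k:ℝ)) - 1) * Real.exp (-(s.re * t)))) (Ioi 0) := by
      intro t ht
      rw [mem_Ioi] at ht
      rw [hT]; simp only
      rw [norm_mul, norm_mul]
      have hexp : ‖Complex.exp (-s * (t:ℂ))‖ = Real.exp (-(s.re * t)) := by
        rw [Complex.norm_exp]
        congr 1
        simp [Complex.mul_re]
      have hcp : ‖(((t:ℝ):ℂ)/2) ^ (W k)‖ = (2⁻¹:ℝ)^(2*(k:ℝ)+ν.re) * t^(2*(k:ℝ)+ν.re) := by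
        rw [show ((t:ℝ):ℂ)/2 = (((t/2 : ℝ)):ℂ) by push_cast; ring,
          Complex.norm_cpow_eq_rpow_re_of_pos (by linarith), hWre]
        rw [show (t/2 : ℝ) = 2⁻¹ * t by ring, Real.mul_rpow (by norm_num) ht.le]
      rw [hexp, hcp, show (g+2*(k:ℝ)) - 1 = 2*(k:ℝ)+ν.re by rw [hgdef]; ring]
      ring
    rw [setIntegral_congr_fun measurableSet_Ioi e, MeasureTheory.integral_const_mul,
      integral_rpow_mul_exp_neg_mul_Ioi
        (show (0:ℝ) < g+2*(k:ℝ) by have : (0:ℝ) ≤ (k:ℝ) := Nat.cast_nonneg k; linarith) hs]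
    ring
  have hbound : ∀ k : ℕ, (∫ t in Ioi (0:ℝ), ‖T k t‖) ≤ M k := by
    intro k
    have hknn : (0:ℝ) ≤ (k:ℝ) := Nat.cast_nonneg k
    have hGgk : 0 < Real.Gamma (g + (k:ℝ)) := Real.Gamma_pos_of_pos (by linarith)
    have hGg2k : 0 < Real.Gamma (g + 2*(k:ℝ)) := Real.Gamma_pos_of_pos (by linarith)
    have hGA : 0 < Real.Gamma (A + 2*(k:ℝ)) := Real.Gamma_pos_of_pos (by linarith)
    have hfac : (0:ℝ) < (k.factorial : ℝ) := by exact_mod_cast k.factorial_pos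
    have hCn : ‖C k‖ = ‖b‖ ^ k * ‖genPoch c ρ (W k)‖ /
        ((k.factorial:ℝ) * ‖Complex.Gamma (ν+(k:ℂ)+1)‖ *
          ‖Complex.Gamma (ν+2*(k:ℂ)+1)‖) := by
      rw [hC]; simp only
      rw [norm_div, norm_mul, norm_pow, norm_neg, norm_mul, norm_mul]
      simp
    have hgp : ‖genPoch c ρ (W k)‖ ≤
        4/ρ.re^2 * Real.Gamma (A + 2*(k:ℝ)) / ‖Complex.Gamma c‖ := by
      rw [genPoch, norm_div]
      have hnum : ‖extGamma ρ (c + W k)‖ ≤ 4/ρ.re^2 * Real.Gamma (A + 2*(k:ℝ)) := by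
        have h := auxC_extGamma_bound hρ (x := c + W k) (by
          rw [Complex.add_re, hWre]; linarith)
        rwa [show (c + W k).re + 2 = A + 2*(k:ℝ) by
          rw [Complex.add_re, hWre, hAdef]; ring] at h
      exact (div_le_div_iff_of_pos_right hGc0).mpr hnum
    have hL1 : ‖Complex.Gamma (ν+1)‖ * Real.Gamma (g+(k:ℝ)) / Real.Gamma g ≤
        ‖Complex.Gamma (ν+(k:ℂ)+1)‖ := by
      have h := auxC_gamma_lower hν1 k
      rw [div_le_iff₀ hGr0]
      rw [show (ν+1).re + (k:ℝ) = g + (k:ℝ) by simp [hgdef],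
        show (ν+1) + (k:ℂ) = ν+(k:ℂ)+1 by ring,
        show (ν+1).re = g by simp [hgdef]] at h
      rw [mul_comm]
      exact h
    have hL2 : ‖Complex.Gamma (ν+1)‖ * Real.Gamma (g+2*(k:ℝ)) / Real.Gamma g ≤
        ‖Complex.Gamma (ν+2*(k:ℂ)+1)‖ := by
      have h := auxC_gamma_lower hν1 (2*k)
      rw [div_le_iff₀ hGr0]
      rw [show (ν+1).re + ((2*k:ℕ):ℝ) = g + 2*(k:ℝ) by simp [hgdef],
        show (ν+1) + ((2*k:ℕ):ℂ) = ν+2*(k:ℂ)+1 by push_cast; ring,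
        show (ν+1).re = g by simp [hgdef]] at h
      rw [mul_comm]
      exact h
    have hX1 : (0:ℝ) ≤ (2⁻¹:ℝ)^(2*(k:ℝ)+ν.re) := Real.rpow_nonneg (by norm_num) _
    have hX2 : (0:ℝ) ≤ (1/s.re)^(g+2*(k:ℝ)) := Real.rpow_nonneg (by positivity) _
    have hpos1 : (0:ℝ) < ‖Complex.Gamma (ν+1)‖ * Real.Gamma (g+(k:ℝ)) /
        Real.Gamma g := div_pos (mul_pos hG00 hGgk) hGr0
    have hpos2 : (0:ℝ) < ‖Complex.Gamma (ν+1)‖ * Real.Gamma (g+2*(k:ℝ)) /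
        Real.Gamma g := div_pos (mul_pos hG00 hGg2k) hGr0
    rw [hnormval k, hCn, div_mul_eq_mul_div]
    have step := div_le_div₀
      (show (0:ℝ) ≤ ‖b‖ ^ k *
          (4/ρ.re^2 * Real.Gamma (A + 2*(k:ℝ)) / ‖Complex.Gamma c‖) *
          ((2⁻¹:ℝ)^(2*(k:ℝ)+ν.re) * ((1/s.re)^(g+2*(k:ℝ)) * Real.Gamma (g+2*(k:ℝ)))) by
        have h9 : (0:ℝ) ≤ 4/ρ.re^2 * Real.Gamma (A + 2*(k:ℝ)) / ‖Complex.Gamma c‖ := by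
          positivity
        positivity)
      (show ‖b‖ ^ k * ‖genPoch c ρ (W k)‖ *
          ((2⁻¹:ℝ)^(2*(k:ℝ)+ν.re) * ((1/s.re)^(g+2*(k:ℝ)) * Real.Gamma (g+2*(k:ℝ)))) ≤
        ‖b‖ ^ k *
          (4/ρ.re^2 * Real.Gamma (A + 2*(k:ℝ)) / ‖Complex.Gamma c‖) *
          ((2⁻¹:ℝ)^(2*(k:ℝ)+ν.re) * ((1/s.re)^(g+2*(k:ℝ)) * Real.Gamma (g+2*(k:ℝ)))) by
        refine mul_le_mul_of_nonneg_right
          (mul_le_mul_of_nonneg_left hgp (by positivity)) (by positivity))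
      (show (0:ℝ) < (k.factorial:ℝ) *
          (‖Complex.Gamma (ν+1)‖ * Real.Gamma (g+(k:ℝ)) / Real.Gamma g) *
          (‖Complex.Gamma (ν+1)‖ * Real.Gamma (g+2*(k:ℝ)) / Real.Gamma g) by
        exact mul_pos (mul_pos hfac hpos1) hpos2)
      (show (k.factorial:ℝ) *
          (‖Complex.Gamma (ν+1)‖ * Real.Gamma (g+(k:ℝ)) / Real.Gamma g) *
          (‖Complex.Gamma (ν+1)‖ * Real.Gamma (g+2*(k:ℝ)) / Real.Gamma g) ≤
          (k.factorial:ℝ) * ‖Complex.Gamma (ν+(k:ℂ)+1)‖ *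
            ‖Complex.Gamma (ν+2*(k:ℂ)+1)‖ by
        exact mul_le_mul (mul_le_mul_of_nonneg_left hL1 hfac.le) hL2 hpos2.le
          (by positivity))
    refine step.trans_eq ?_
    have hc2 : (2⁻¹:ℝ)^(2*(k:ℝ)+ν.re) = (4⁻¹:ℝ)^k * (2⁻¹:ℝ)^(ν.re) := by
      rw [show 2*(k:ℝ)+ν.re = ((2*k:ℕ):ℝ) + ν.re by push_cast; ring,
        Real.rpow_add (by norm_num : (0:ℝ) < 2⁻¹), Real.rpow_natCast, pow_mul]
      norm_num
    have hcs : (1/s.re)^(g+2*(k:ℝ)) = ((1/s.re)^2)^k * (1/s.re)^(ν.re+1) := by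
      rw [show g+2*(k:ℝ) = ((2*k:ℕ):ℝ) + (ν.re+1) by rw [hgdef]; push_cast; ring,
        Real.rpow_add (by positivity : (0:ℝ) < 1/s.re), Real.rpow_natCast, pow_mul]
    have hQk : Q^k = ‖b‖ ^ k * ((4⁻¹:ℝ)^k * ((1/s.re)^2)^k) := by
      rw [← mul_pow, ← mul_pow]
      congr 1
      rw [hQdef]
      field_simp
    rw [hMdef]
    simp only
    rw [hKdef, hc2, hcs, hQk]
    have hsre : s.re ≠ 0 := hs.ne'
    have hρre : ρ.re ≠ 0 := hρ.ne'
    field_simp [hGc0.ne', hG00.ne', hGr0.ne', hGgk.ne', hGg2k.ne', hfac.ne']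
  have hTsum : Summable (fun k : ℕ => ∫ t in Ioi (0:ℝ), ‖T k t‖) :=
    Summable.of_nonneg_of_le
      (fun k => integral_nonneg (fun t => norm_nonneg _)) hbound hMsum
  calc (∫ t in Ioi (0:ℝ), Complex.exp (-s * (t:ℂ)) * unifiedG b c ν ρ (t:ℂ))
      = ∫ t in Ioi (0:ℝ), ∑' k, T k t :=
        integral_congr_ae (Filter.Eventually.of_forall fun t => hint_eq t)
    _ = ∑' k, ∫ t in Ioi (0:ℝ), T k t :=
        (MeasureTheory.integral_tsum_of_summable_integral_norm hTint hTsum).symm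
    _ = ∑' k : ℕ, 1/s * ((-b) ^ k * genPoch c ρ (2 * (k:ℂ) + ν) *
          (1 / (2 * s)) ^ (2 * (k:ℂ) + ν) /
          ((k.factorial : ℂ) * Complex.Gamma (ν + (k:ℂ) + 1))) := tsum_congr hTval
    _ = 1 / s * ∑' k : ℕ, (-b) ^ k * genPoch c ρ (2 * (k:ℂ) + ν) *
          (1 / (2 * s)) ^ (2 * (k:ℂ) + ν) /
          ((k.factorial : ℂ) * Complex.Gamma (ν + (k:ℂ) + 1)) := tsum_mul_left
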